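/- Let G be a graph on n vertices and let M be a matching in G consisting of e edges. Let v be a vertex of G covered by M. Then the number of independent sets in G containing v is at most 3^(e−1) · 2^(n−2e). -/

import Mathlib

open Classical in
theorem stmt3 {V : Type*} [Fintype V] (G : SimpleGraph V) (M : Finset (V × V))
    (hadj : ∀ e ∈ M, G.Adj e.1 e.2)
    (hdisj : ∀ e ∈ M, ∀ f ∈ M, e ≠ f →
      e.1 ≠ f.1 ∧ e.1 ≠ f.2 ∧ e.2 ≠ f.1 ∧ e.2 ≠ f.2)
    (v : V) (hv : ∃ e ∈ M, v = e.1 ∨ v = e.2) :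
    ((Finset.univ : Finset (Finset V)).filter
        (fun s => v ∈ s ∧ ∀ x ∈ s, ∀ y ∈ s, ¬ G.Adj x y)).card ≤
      3 ^ (M.card - 1) * 2 ^ (Fintype.card V - 2 * M.card) := by
  classical
  obtain ⟨e₀, he₀M, hve₀⟩ := hv
  set M' : Finset (V × V) := M.erase e₀ with hM'
  set C : Finset V := M.biUnion (fun e => {e.1, e.2}) with hCdef
  set U : Finset V := Finset.univ \ C with hUdef
  have hCcard : C.card = 2 * M.card := by
    rw [hCdef, Finset.card_biUnion]
    · rw [Finset.sum_congr rfl (fun e he => ?_), Finset.sum_const, smul_eq_mul, mul_comm]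
      rw [Finset.card_insert_of_notMem (by
        simp only [Finset.mem_singleton]; exact (hadj e he).ne), Finset.card_singleton]
    · intro e he f hf hef
      obtain ⟨h1, h2, h3, h4⟩ := hdisj e he f hf hef
      rw [Function.onFun, Finset.disjoint_left]
      intro a ha hb
      simp only [Finset.mem_insert, Finset.mem_singleton] at ha hb
      rcases ha with rfl | rfl <;> rcases hb with h | h <;> tauto
  have hUcard : U.card = Fintype.card V - 2 * M.card := by
    rw [hUdef, Finset.card_sdiff_of_subset (Finset.subset_univ C), Finset.card_univ, hCcard]
  have hM'card : M'.card = M.card - 1 := Finset.card_erase_of_mem he₀M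
  set P : Finset V → Prop := fun s => v ∈ s ∧ ∀ x ∈ s, ∀ y ∈ s, ¬ G.Adj x y with hP
  set Φ : Finset V → ({x // x ∈ M'} → Fin 3) × Finset V := fun s =>
    ((fun e => if e.1.1 ∈ s then 1 else if e.1.2 ∈ s then 2 else 0), s ∩ U) with hΦ
  have hsub : ∀ s t : Finset V, P s → P t → Φ s = Φ t → s ⊆ t := by
    intro s t hs ht heq x hxs
    have hf : ∀ e : {x // x ∈ M'},
        (if e.1.1 ∈ s then (1 : Fin 3) else if e.1.2 ∈ s then 2 else 0) =
        (if e.1.1 ∈ t then 1 else if e.1.2 ∈ t then 2 else 0) := by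
      intro e; exact congrFun (congrArg Prod.fst heq) e
    have hg : s ∩ U = t ∩ U := congrArg Prod.snd heq
    by_cases hxC : x ∈ C
    · rw [hCdef] at hxC
      obtain ⟨e, heM, hxe⟩ := Finset.mem_biUnion.mp hxC
      simp only [Finset.mem_insert, Finset.mem_singleton] at hxe
      by_cases he0 : e = e₀
      · subst he0
        have hadj0 := hadj e he₀M
        have hvs : v ∈ s := hs.1
        have hxv : x = v := by
          rcases hve₀ with hv1 | hv2 <;> rcases hxe with rfl | rfl
          · exact hv1.symm
          · exact absurd hadj0 (hs.2 _ (hv1 ▸ hvs) _ hxs)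
          · exact absurd hadj0 (hs.2 _ hxs _ (hv2 ▸ hvs))
          · exact hv2.symm
        rw [hxv]; exact ht.1
      · have heM' : e ∈ M' := Finset.mem_erase.mpr ⟨he0, heM⟩
        have heqf := hf ⟨e, heM'⟩
        rcases hxe with rfl | rfl
        · rw [if_pos hxs] at heqf
          by_cases h1 : e.1 ∈ t
          · exact h1
          · exfalso
            rw [if_neg h1] at heqf
            by_cases h2 : e.2 ∈ t
            · rw [if_pos h2] at heqf; exact absurd heqf (by decide)
            · rw [if_neg h2] at heqf; exact absurd heqf (by decide)
        · have h1s : e.1 ∉ s := fun h => hs.2 _ h _ hxs (hadj e heM)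
          rw [if_neg h1s, if_pos hxs] at heqf
          by_cases h1 : e.1 ∈ t
          · exfalso; rw [if_pos h1] at heqf; exact absurd heqf (by decide)
          · rw [if_neg h1] at heqf
            by_cases h2 : e.2 ∈ t
            · exact h2
            · exfalso; rw [if_neg h2] at heqf; exact absurd heqf (by decide)
    · have hxU : x ∈ U := by rw [hUdef]; exact Finset.mem_sdiff.mpr ⟨Finset.mem_univ x, hxC⟩
      have : x ∈ t ∩ U := hg ▸ Finset.mem_inter.mpr ⟨hxs, hxU⟩
      exact (Finset.mem_inter.mp this).1
  have hinj : Set.InjOn Φ ((Finset.univ : Finset (Finset V)).filter P) := by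
    intro s hs t ht heq
    simp only [Finset.coe_filter, Set.mem_setOf_eq] at hs ht
    exact Finset.Subset.antisymm (hsub s t hs.2 ht.2 heq) (hsub t s ht.2 hs.2 heq.symm)
  have hmaps : ∀ s ∈ (Finset.univ : Finset (Finset V)).filter P,
      Φ s ∈ (Finset.univ : Finset ({x // x ∈ M'} → Fin 3)) ×ˢ U.powerset := by
    intro s _
    exact Finset.mem_product.mpr ⟨Finset.mem_univ _,
      Finset.mem_powerset.mpr (Finset.inter_subset_right)⟩
  have hcard := Finset.card_le_card_of_injOn Φ hmaps hinj
  rw [Finset.card_product, Finset.card_univ, Fintype.card_fun, Fintype.card_fin,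
    Fintype.card_coe, Finset.card_powerset] at hcard
  rw [hM'card, hUcard] at hcard
  exact hcard
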